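/- (At most one faulty predecessor, combined.) Assume ϑκ ≤ Λ − d and let H be a hardware clock. Suppose one of the following two situations holds. (a) Own predecessor faulty: W is a nonempty finite index set with pulse times (t_w)_{w∈W} and reception times r_w ∈ [t_w + d − u, t_w + d]; H_min := min_{w∈W} H(r_w), H_max := max_{w∈W} H(r_w); H_own is an arbitrary real; t_min := min_{w∈W} t_w and t_max := max_{w∈W} t_w. (b) Own predecessor correct, at most one faulty neighbour: t_own ∈ ℝ, r_own ∈ [t_own + d − u, t_own + d], H_own := H(r_own); W is a nonempty finite index set with pulse times (t_w)_{w∈W} and reception times r_w ∈ [t_w + d − u, t_w + d]; S := {H(r_w) : w ∈ W} ∪ F with F empty or a singleton {h} for an arbitrary real h; H_min := min S, H_max := max S; t_min and t_max are the minimum and maximum of {t_w : w ∈ W} ∪ {t_own}. In either case let C be the algorithm correction computed from (H_own, H_min, H_max) and t_pulse the unique real with H(t_pulse) = H_own + Λ − d − C. Then t_min + Λ − 2κ ≤ t_pulse ≤ t_max + Λ + 2κ. -/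

import Mathlib

set_option maxHeartbeats 1000000

private lemma low_aux (ϑ u d Λ κ : ℝ)
    (hϑ : 1 < ϑ) (hu : 0 ≤ u) (hΛ : d < Λ)
    (hκϑ : ϑ*κ = 2*ϑ*u + 2*(ϑ-1)*(Λ-d)) (hκ2u : 2*u ≤ κ)
    (H : ℝ → ℝ)
    (hH : ∀ t t' : ℝ, t ≤ t' → t' - t ≤ H t' - H t ∧ H t' - H t ≤ ϑ * (t' - t))
    (tp t0 tb a : ℝ) (ht0 : tb + d - u ≤ t0)
    (ha1 : a ≤ 3*ϑ*κ/2) (ha2 : Λ - d - a < 0 → a ≤ 3*κ/2)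
    (h : H t0 + (Λ - d - a) ≤ H tp) : tb + Λ - 2*κ ≤ tp := by
  have hϑ0 : (0:ℝ) < ϑ := by linarith
  have hκ0 : 0 ≤ κ := by linarith
  rcases le_or_gt 0 (Λ - d - a) with hc | hc
  · have h1 : t0 ≤ tp := by
      by_contra hlt
      push_neg at hlt
      have := (hH tp t0 hlt.le).1
      linarith
    have h2 := (hH t0 tp h1).2
    have h3 : Λ - d - a ≤ ϑ * (tp - t0) := by linarith
    have h4 : ϑ * (tb + d - u) ≤ ϑ * t0 := by
      exact mul_le_mul_of_nonneg_left ht0 hϑ0.le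
    have h5 : ϑ * (tb + Λ - 2*κ) ≤ ϑ * tp := by nlinarith
    exact le_of_mul_le_mul_left h5 hϑ0
  · have ha2' := ha2 hc
    have h1 : tb + d - u + (Λ - d - a) ≤ tp := by
      rcases le_or_gt t0 tp with h1 | h1
      · linarith
      · have := (hH tp t0 h1.le).1
        linarith
    linarith

private lemma high_aux (ϑ u d Λ κ : ℝ)
    (hϑ : 1 < ϑ) (hu : 0 ≤ u) (hΛ : d < Λ) (hϑκ : ϑ*κ ≤ Λ - d) (hκ0 : 0 ≤ κ)
    (H : ℝ → ℝ)
    (hH : ∀ t t' : ℝ, t ≤ t' → t' - t ≤ H t' - H t ∧ H t' - H t ≤ ϑ * (t' - t))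
    (tp t0 tb b : ℝ) (ht0 : t0 ≤ tb + d)
    (hb1 : -(ϑ*κ) ≤ b) (hb2 : b ≤ 2*κ)
    (h : H tp ≤ H t0 + (Λ - d + b)) : tp ≤ tb + Λ + 2*κ := by
  rcases le_or_gt tp t0 with h1 | h1
  · linarith
  · have := (hH t0 tp h1.le).1
    linarith

/-- Corollary `fault`: at most one faulty predecessor, combined.
Scenario (a): own predecessor faulty; scenario (b): own predecessor correct and
at most one faulty neighbouring predecessor. -/
theorem stmt16
    (ϑ u d Λ κ : ℝ)
    (hϑ : 1 < ϑ) (hu : 0 ≤ u) (hd : u ≤ d) (hΛ : d < Λ)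
    (hκ : κ = 2 * (u + (1 - 1/ϑ) * (Λ - d)))
    (hϑκ : ϑ*κ ≤ Λ - d)
    (H : ℝ → ℝ)
    (hH : ∀ t t' : ℝ, t ≤ t' → t' - t ≤ H t' - H t ∧ H t' - H t ≤ ϑ * (t' - t))
    (Hown Hmin Hmax tmin tmax : ℝ)
    (hscenario :
      -- (a) own predecessor faulty, all neighbouring predecessors correct
      (∃ (ι : Type) (_ : Fintype ι) (_ : Nonempty ι) (tw r : ι → ℝ),
        (∀ w : ι, tw w + d - u ≤ r w ∧ r w ≤ tw w + d) ∧
        Hmin = ⨅ w : ι, H (r w) ∧ Hmax = ⨆ w : ι, H (r w) ∧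
        tmin = ⨅ w : ι, tw w ∧ tmax = ⨆ w : ι, tw w) ∨
      -- (b) own predecessor correct, at most one faulty neighbour
      (∃ town rown : ℝ,
        (town + d - u ≤ rown ∧ rown ≤ town + d) ∧ Hown = H rown ∧
        ∃ (ι : Type) (_ : Fintype ι) (_ : Nonempty ι) (tw r : ι → ℝ)
          (fault : Option ℝ),
          (∀ w : ι, tw w + d - u ≤ r w ∧ r w ≤ tw w + d) ∧
          Hmin = fault.elim (⨅ w : ι, H (r w))
            (fun h => min (⨅ w : ι, H (r w)) h) ∧
          Hmax = fault.elim (⨆ w : ι, H (r w))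
            (fun h => max (⨆ w : ι, H (r w)) h) ∧
          tmin = min (⨅ w : ι, tw w) town ∧
          tmax = max (⨆ w : ι, tw w) town))
    (Δ : ℝ)
    (hΔ : IsLeast {x : ℝ | ∃ s : ℕ,
      x = max (Hown - Hmax + 4*(s:ℝ)*κ) (Hown - Hmin - 4*(s:ℝ)*κ)} (Δ + κ/2))
    (C : ℝ)
    (hC1 : 0 ≤ Δ → Δ ≤ ϑ*κ → C = Δ)
    (hC2 : Δ < 0 → C = min (Hown - Hmin + 3*κ/2) 0)
    (hC3 : ϑ*κ < Δ → C = max (Hown - Hmax - 3*κ/2) (ϑ*κ))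
    (tpulse : ℝ) (hpulse : H tpulse = Hown + Λ - d - C) :
    tmin + Λ - 2*κ ≤ tpulse ∧ tpulse ≤ tmax + Λ + 2*κ := by
  have hϑ0 : (0:ℝ) < ϑ := by linarith
  have hϑne : ϑ ≠ 0 := ne_of_gt hϑ0
  have hκϑ : ϑ*κ = 2*ϑ*u + 2*(ϑ-1)*(Λ-d) := by
    rw [hκ]; field_simp
  have hκ2u : 2*u ≤ κ := by nlinarith
  have hκ0 : 0 ≤ κ := by linarith
  have hϑκ0 : (0:ℝ) ≤ ϑ*κ := by positivity
  -- facts about Δ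
  obtain ⟨⟨s, hs⟩, hlb⟩ := hΔ
  have hs4 : 0 ≤ 4*(s:ℝ)*κ := by positivity
  have keyA : Hown - Hmax ≤ Δ + κ/2 := by
    have h1 := le_max_left (Hown - Hmax + 4*(s:ℝ)*κ) (Hown - Hmin - 4*(s:ℝ)*κ)
    rw [← hs] at h1
    linarith
  have keyB : Δ + κ/2 ≤ Hown - Hmax ∨ Δ + κ/2 ≤ Hown - Hmin := by
    have h1 : Δ + κ/2 ≤ max (Hown - Hmax + 4*((0:ℕ):ℝ)*κ)
        (Hown - Hmin - 4*((0:ℕ):ℝ)*κ) := hlb ⟨0, rfl⟩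
    norm_num at h1
    exact h1
  rcases hscenario with ⟨ι, iF, iN, tw, r, hr, hHmin, hHmax, htmin, htmax⟩ |
    ⟨town, rown, hrown, hHown, ι, iF, iN, tw, r, fault, hr, hHmin, hHmax, htmin, htmax⟩
  · -- scenario (a)
    obtain ⟨w0, hw0⟩ : ∃ w0, H (r w0) = ⨅ j, H (r j) := exists_eq_ciInf_of_finite
    obtain ⟨w1, hw1⟩ : ∃ w1, H (r w1) = ⨆ j, H (r j) := exists_eq_ciSup_of_finite
    have hminmax : Hmin ≤ Hmax := by
      rw [hHmin, hHmax, ← hw0, ← hw1]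
      calc H (r w0) ≤ ⨆ j, H (r j) :=
            le_ciSup (f := fun j => H (r j)) (Finite.bddAbove_range _) w0
        _ = H (r w1) := hw1.symm
    have keyB' : Δ + κ/2 ≤ Hown - Hmin := by
      rcases keyB with h1 | h1 <;> linarith
    -- combined bounds on Hown - C
    have hbounds : Hmin - 3*κ/2 ≤ Hown - C ∧ Hown - C ≤ Hmax + 3*κ/2 := by
      rcases lt_or_ge Δ 0 with hΔ1 | hΔ1
      · rw [hC2 hΔ1]
        constructor
        · have := min_le_left (Hown - Hmin + 3*κ/2) 0
          linarith
        · have h2 : Hown - Hmax - 3*κ/2 ≤ min (Hown - Hmin + 3*κ/2) 0 := by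
            apply le_min <;> linarith
          linarith
      · rcases le_or_gt Δ (ϑ*κ) with hΔ2 | hΔ2
        · rw [hC1 hΔ1 hΔ2]
          constructor <;> linarith
        · rw [hC3 hΔ2]
          constructor
          · have h2 : max (Hown - Hmax - 3*κ/2) (ϑ*κ) ≤ Hown - Hmin + 3*κ/2 := by
              apply max_le <;> linarith
            linarith
          · have := le_max_left (Hown - Hmax - 3*κ/2) (ϑ*κ)
            linarith
    constructor
    · have hlow : tw w0 + Λ - 2*κ ≤ tpulse := by
        apply low_aux ϑ u d Λ κ hϑ hu hΛ hκϑ hκ2u H hH tpulse (r w0) (tw w0) (3*κ/2)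
          (hr w0).1 (by nlinarith [mul_nonneg hκ0 (by linarith : (0:ℝ) ≤ ϑ - 1)]) (fun _ => le_refl _)
        rw [hpulse, hw0, ← hHmin]
        linarith [hbounds.1]
      have : tmin ≤ tw w0 := by
        rw [htmin]; exact ciInf_le (Finite.bddBelow_range _) w0
      linarith
    · have hhigh : tpulse ≤ tw w1 + Λ + 2*κ := by
        apply high_aux ϑ u d Λ κ hϑ hu hΛ hϑκ hκ0 H hH tpulse (r w1) (tw w1) (3*κ/2)
          (hr w1).2 (by linarith) (by linarith)
        rw [hpulse, hw1, ← hHmax]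
        linarith [hbounds.2]
      have : tw w1 ≤ tmax := by
        rw [htmax]; exact le_ciSup (Finite.bddAbove_range _) w1
      linarith
  · -- scenario (b)
    obtain ⟨w0, hw0⟩ : ∃ w0, H (r w0) = ⨅ j, H (r j) := exists_eq_ciInf_of_finite
    obtain ⟨w1, hw1⟩ : ∃ w1, H (r w1) = ⨆ j, H (r j) := exists_eq_ciSup_of_finite
    have hm : Hmin ≤ H (r w0) := by
      rw [hHmin, hw0]
      cases fault with
      | none => simp
      | some h => simpa using min_le_left _ h
    have hM : H (r w1) ≤ Hmax := by
      rw [hHmax, hw1]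
      cases fault with
      | none => simp
      | some h => simpa using le_max_left _ h
    have htmin1 : tmin ≤ town := by rw [htmin]; exact min_le_right _ _
    have htmin0 : tmin ≤ tw w0 := by
      rw [htmin]
      exact le_trans (min_le_left _ _) (ciInf_le (Finite.bddBelow_range _) w0)
    have htmin0' : tmin ≤ tw w1 := by
      rw [htmin]
      exact le_trans (min_le_left _ _) (ciInf_le (Finite.bddBelow_range _) w1)
    have htmax1 : town ≤ tmax := by rw [htmax]; exact le_max_right _ _
    have htmax0 : tw w0 ≤ tmax := by
      rw [htmax]
      exact le_trans (le_ciSup (Finite.bddAbove_range _) w0) (le_max_left _ _)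
    rcases lt_or_ge Δ 0 with hΔ1 | hΔ1
    · rw [hC2 hΔ1] at hpulse
      have hCle : min (Hown - Hmin + 3*κ/2) 0 ≤ 0 := min_le_right _ _
      constructor
      · have hlow : town + Λ - 2*κ ≤ tpulse := by
          apply low_aux ϑ u d Λ κ hϑ hu hΛ hκϑ hκ2u H hH tpulse rown town 0
            hrown.1 (by linarith) (fun hc => absurd hc (by push_neg; linarith))
          rw [hpulse, ← hHown]
          linarith
        linarith
      · rcases le_total (Hown - Hmin + 3*κ/2) 0 with hc | hc
        · rw [min_eq_left hc] at hpulse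
          have hhigh : tpulse ≤ tw w0 + Λ + 2*κ := by
            apply high_aux ϑ u d Λ κ hϑ hu hΛ hϑκ hκ0 H hH tpulse (r w0) (tw w0) 0
              (hr w0).2 (by linarith) (by linarith)
            rw [hpulse]
            linarith
          linarith
        · rw [min_eq_right hc] at hpulse
          have hhigh : tpulse ≤ town + Λ + 2*κ := by
            apply high_aux ϑ u d Λ κ hϑ hu hΛ hϑκ hκ0 H hH tpulse rown town 0
              hrown.2 (by linarith) (by linarith)
            rw [hpulse, ← hHown]
            linarith
          linarith
    · rcases le_or_gt Δ (ϑ*κ) with hΔ2 | hΔ2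
      · rw [hC1 hΔ1 hΔ2] at hpulse
        constructor
        · have hlow : town + Λ - 2*κ ≤ tpulse := by
            apply low_aux ϑ u d Λ κ hϑ hu hΛ hκϑ hκ2u H hH tpulse rown town Δ
              hrown.1 (by linarith) (fun hc => absurd hc (by push_neg; linarith))
            rw [hpulse, ← hHown]
            linarith
          linarith
        · have hhigh : tpulse ≤ town + Λ + 2*κ := by
            apply high_aux ϑ u d Λ κ hϑ hu hΛ hϑκ hκ0 H hH tpulse rown town (-Δ)
              hrown.2 (by linarith) (by linarith)
            rw [hpulse, ← hHown]
            linarith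
          linarith
      · rw [hC3 hΔ2] at hpulse
        constructor
        · rcases le_total (Hown - Hmax - 3*κ/2) (ϑ*κ) with hc | hc
          · rw [max_eq_right hc] at hpulse
            have hlow : town + Λ - 2*κ ≤ tpulse := by
              apply low_aux ϑ u d Λ κ hϑ hu hΛ hκϑ hκ2u H hH tpulse rown town (ϑ*κ)
                hrown.1 (by linarith) (fun hc' => absurd hc' (by push_neg; linarith))
              rw [hpulse, ← hHown]
              linarith
            linarith
          · rw [max_eq_left hc] at hpulse
            have hlow : tw w1 + Λ - 2*κ ≤ tpulse := by
              apply low_aux ϑ u d Λ κ hϑ hu hΛ hκϑ hκ2u H hH tpulse (r w1) (tw w1)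
                (-(3*κ/2)) (hr w1).1 (by linarith)
                (fun hc' => absurd hc' (by push_neg; linarith))
              rw [hpulse]
              linarith
            linarith
        · have hCge : 0 ≤ max (Hown - Hmax - 3*κ/2) (ϑ*κ) :=
            le_trans hϑκ0 (le_max_right _ _)
          have hhigh : tpulse ≤ town + Λ + 2*κ := by
            apply high_aux ϑ u d Λ κ hϑ hu hΛ hϑκ hκ0 H hH tpulse rown town 0
              hrown.2 (by linarith) (by linarith)
            rw [hpulse, ← hHown]
            linarith
          linarith
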